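/- Let G be a countable group, and let H, K be uniformly recurrent subgroups of G with H ≼ K (i.e., some element of H is contained in some element of K). Then every element of H is contained in some element of K, and every element of K contains some element of H. -/
import Mathlib


/-- The Chabauty topology on the space of subgroups of `G`. -/
noncomputable instance chabautyTopology {G : Type*} [Group G] :
    TopologicalSpace (Subgroup G) :=
  TopologicalSpace.induced
    (fun H : Subgroup G => fun g : G => @decide (g ∈ H) (Classical.propDecidable _))
    inferInstance

/-- A uniformly recurrent subgroup: a closed, minimal, conjugation-invariant nonempty
subset of the Chabauty space `Sub(G)`. -/
def IsURS {G : Type*} [Group G] (𝓗 : Set (Subgroup G)) : Prop :=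
  IsClosed 𝓗 ∧ 𝓗.Nonempty ∧
    (∀ (g : G), ∀ H ∈ 𝓗, Subgroup.map (MulAut.conj g).toMonoidHom H ∈ 𝓗) ∧
    ∀ 𝓚 : Set (Subgroup G), 𝓚 ⊆ 𝓗 → IsClosed 𝓚 → 𝓚.Nonempty →
      (∀ (g : G), ∀ H ∈ 𝓚, Subgroup.map (MulAut.conj g).toMonoidHom H ∈ 𝓚) → 𝓚 = 𝓗

namespace ChabautyAux

variable {G : Type*} [Group G]

noncomputable def ι : Subgroup G → (G → Bool) :=
  fun H g => @decide (g ∈ H) (Classical.propDecidable _)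

lemma ι_eq_true_iff {H : Subgroup G} {g : G} : ι H g = true ↔ g ∈ H := by
  simp [ι, decide_eq_true_eq]

lemma inducing_ι : Topology.IsInducing (ι (G := G)) := ⟨rfl⟩

lemma injective_ι : Function.Injective (ι (G := G)) := by
  intro H K h
  ext g
  rw [← ι_eq_true_iff (H := H), ← ι_eq_true_iff (H := K), h]

lemma continuous_eval (g : G) : Continuous (fun H : Subgroup G => ι H g) :=
  (continuous_apply g).comp inducing_ι.continuous

lemma isClosed_range_ι : IsClosed (Set.range (ι (G := G))) := by
  have hrange : Set.range (ι (G := G)) =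
      {f : G → Bool | f 1 = true} ∩
      ((⋂ g : G, {f : G → Bool | f g = true → f g⁻¹ = true}) ∩
       (⋂ g : G, ⋂ h : G, {f : G → Bool | f g = true → f h = true → f (g * h) = true})) := by
    ext f
    constructor
    · rintro ⟨H, rfl⟩
      refine ⟨ι_eq_true_iff.mpr H.one_mem, ?_, ?_⟩
      · simp only [Set.mem_iInter, Set.mem_setOf_eq]
        intro g hg
        exact ι_eq_true_iff.mpr (H.inv_mem (ι_eq_true_iff.mp hg))
      · simp only [Set.mem_iInter, Set.mem_setOf_eq]
        intro g h hg hh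
        exact ι_eq_true_iff.mpr (H.mul_mem (ι_eq_true_iff.mp hg) (ι_eq_true_iff.mp hh))
    · rintro ⟨h1, hinv, hmul⟩
      simp only [Set.mem_iInter, Set.mem_setOf_eq] at h1 hinv hmul
      refine ⟨{ carrier := {g | f g = true},
                one_mem' := h1,
                inv_mem' := fun hx => hinv _ hx,
                mul_mem' := fun hx hy => hmul _ _ hx hy }, ?_⟩
      funext g
      by_cases hg : f g = true
      · rw [ι_eq_true_iff.mpr hg, hg]
      · rw [Bool.eq_false_iff.mpr hg, ← Bool.not_eq_true, Bool.not_eq_true]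
        rw [← Bool.not_eq_true]
        intro hc
        exact hg (ι_eq_true_iff.mp hc)
  rw [hrange]
  have hc : ∀ (g : G) (b : Bool), IsClosed {f : G → Bool | f g = b} :=
    fun g b => by
      have : {f : G → Bool | f g = b} = (fun f : G → Bool => f g) ⁻¹' {b} := rfl
      rw [this]
      exact (isClosed_singleton (x := b)).preimage (continuous_apply g)
  refine IsClosed.inter (hc 1 true) (IsClosed.inter ?_ ?_)
  · refine isClosed_iInter fun g => ?_
    have : {f : G → Bool | f g = true → f g⁻¹ = true} =
        {f : G → Bool | f g = false} ∪ {f : G → Bool | f g⁻¹ = true} := by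
      ext f
      simp only [Set.mem_setOf_eq, Set.mem_union]
      rcases Bool.eq_false_or_eq_true (f g) with h | h <;> simp [h]
    rw [this]
    exact (hc g false).union (hc g⁻¹ true)
  · refine isClosed_iInter fun g => isClosed_iInter fun h => ?_
    have : {f : G → Bool | f g = true → f h = true → f (g * h) = true} =
        {f : G → Bool | f g = false} ∪ ({f : G → Bool | f h = false} ∪
          {f : G → Bool | f (g * h) = true}) := by
      ext f
      simp only [Set.mem_setOf_eq, Set.mem_union]
      rcases Bool.eq_false_or_eq_true (f g) with h1 | h1 <;>
        rcases Bool.eq_false_or_eq_true (f h) with h2 | h2 <;> simp [h1, h2]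
    rw [this]
    exact (hc g false).union ((hc h false).union (hc (g * h) true))

instance : CompactSpace (Subgroup G) := by
  constructor
  rw [inducing_ι.isCompact_iff, Set.image_univ]
  exact isClosed_range_ι.isCompact

instance : T2Space (Subgroup G) :=
  (Topology.IsEmbedding.mk inducing_ι injective_ι).t2Space

lemma isClosed_le_rel : IsClosed {p : Subgroup G × Subgroup G | p.1 ≤ p.2} := by
  have : {p : Subgroup G × Subgroup G | p.1 ≤ p.2} =
      ⋂ g : G, ({p : Subgroup G × Subgroup G | ι p.1 g = false} ∪
        {p : Subgroup G × Subgroup G | ι p.2 g = true}) := by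
    ext p
    simp only [Set.mem_setOf_eq, Set.mem_iInter, Set.mem_union, SetLike.le_def]
    constructor
    · intro hle g
      rcases Bool.eq_false_or_eq_true (ι p.1 g) with h | h
      · exact Or.inr (ι_eq_true_iff.mpr (hle (ι_eq_true_iff.mp h)))
      · exact Or.inl h
    · intro h g hg
      rcases h g with h' | h'
      · rw [ι_eq_true_iff.mpr hg] at h'; exact absurd h' (by simp)
      · exact ι_eq_true_iff.mp h'
  rw [this]
  refine isClosed_iInter fun g => IsClosed.union ?_ ?_
  · have : {p : Subgroup G × Subgroup G | ι p.1 g = false} =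
        (fun p : Subgroup G × Subgroup G => ι p.1 g) ⁻¹' {false} := rfl
    rw [this]
    exact (isClosed_singleton (x := false)).preimage
      ((continuous_eval g).comp continuous_fst)
  · have : {p : Subgroup G × Subgroup G | ι p.2 g = true} =
        (fun p : Subgroup G × Subgroup G => ι p.2 g) ⁻¹' {true} := rfl
    rw [this]
    exact (isClosed_singleton (x := true)).preimage
      ((continuous_eval g).comp continuous_snd)

end ChabautyAux

/-- If `𝓗 ≼ 𝓚` for URS's `𝓗, 𝓚` (some element of `𝓗` is contained in some element of
`𝓚`), then every element of `𝓗` is contained in some element of `𝓚` and every element of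
`𝓚` contains some element of `𝓗`. -/
theorem urs_prec_strong {G : Type*} [Group G] [Countable G]
    (𝓗 𝓚 : Set (Subgroup G)) (h𝓗 : IsURS 𝓗) (h𝓚 : IsURS 𝓚)
    (hprec : ∃ H ∈ 𝓗, ∃ K ∈ 𝓚, H ≤ K) :
    (∀ H ∈ 𝓗, ∃ K ∈ 𝓚, H ≤ K) ∧ (∀ K ∈ 𝓚, ∃ H ∈ 𝓗, H ≤ K) := by
  classical
  obtain ⟨h𝓗c, _, h𝓗inv, h𝓗min⟩ := h𝓗
  obtain ⟨h𝓚c, _, h𝓚inv, h𝓚min⟩ := h𝓚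
  set X : Set (Subgroup G × Subgroup G) :=
    (𝓗 ×ˢ 𝓚) ∩ {p | p.1 ≤ p.2} with hX
  have hXclosed : IsClosed X := (h𝓗c.prod h𝓚c).inter ChabautyAux.isClosed_le_rel
  have hXne : X.Nonempty := by
    obtain ⟨H, hH, K, hK, hle⟩ := hprec
    exact ⟨(H, K), ⟨hH, hK⟩, hle⟩
  have hXcompact : IsCompact X := hXclosed.isCompact
  have hXinv : ∀ (g : G), ∀ p ∈ X,
      (Subgroup.map (MulAut.conj g).toMonoidHom p.1,
       Subgroup.map (MulAut.conj g).toMonoidHom p.2) ∈ X := by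
    rintro g p ⟨⟨h1, h2⟩, hle⟩
    exact ⟨⟨h𝓗inv g _ h1, h𝓚inv g _ h2⟩, Subgroup.map_mono hle⟩
  have key : ∀ (π : Subgroup G × Subgroup G → Subgroup G), Continuous π →
      ∀ (𝓛 : Set (Subgroup G)), IsClosed 𝓛 →
      (∀ (g : G), ∀ H ∈ 𝓛, Subgroup.map (MulAut.conj g).toMonoidHom H ∈ 𝓛) →
      (∀ 𝓜 : Set (Subgroup G), 𝓜 ⊆ 𝓛 → IsClosed 𝓜 → 𝓜.Nonempty →
        (∀ (g : G), ∀ H ∈ 𝓜, Subgroup.map (MulAut.conj g).toMonoidHom H ∈ 𝓜) → 𝓜 = 𝓛) →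
      (π '' X ⊆ 𝓛) →
      (∀ (g : G), ∀ p ∈ X, π (Subgroup.map (MulAut.conj g).toMonoidHom p.1,
        Subgroup.map (MulAut.conj g).toMonoidHom p.2)
        = Subgroup.map (MulAut.conj g).toMonoidHom (π p)) →
      π '' X = 𝓛 := by
    intro π hπ 𝓛 h𝓛c h𝓛inv h𝓛min hsub hcomm
    refine h𝓛min _ hsub (hXcompact.image hπ).isClosed ⟨π hXne.some, hXne.some, hXne.some_mem, rfl⟩ ?_
    rintro g _ ⟨p, hp, rfl⟩
    exact ⟨_, hXinv g p hp, hcomm g p hp⟩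
  have h1 : Prod.fst '' X = 𝓗 :=
    key Prod.fst continuous_fst 𝓗 h𝓗c h𝓗inv h𝓗min
      (by rintro _ ⟨p, ⟨⟨h1, _⟩, _⟩, rfl⟩; exact h1)
      (fun g p _ => rfl)
  have h2 : Prod.snd '' X = 𝓚 :=
    key Prod.snd continuous_snd 𝓚 h𝓚c h𝓚inv h𝓚min
      (by rintro _ ⟨p, ⟨⟨_, h2⟩, _⟩, rfl⟩; exact h2)
      (fun g p _ => rfl)
  constructor
  · intro H hH
    rw [← h1] at hH
    obtain ⟨p, hp, rfl⟩ := hH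
    exact ⟨p.2, hp.1.2, hp.2⟩
  · intro K hK
    rw [← h2] at hK
    obtain ⟨p, hp, rfl⟩ := hK
    exact ⟨p.1, hp.1.1, hp.2⟩
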